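/- For every positive integer $l$, $\sum_{k=1}^{l} k\binom{3l}{2l+k}\binom{3l}{2l-k} = \frac{l}{3}\binom{3l}{l}^2$. -/
import Mathlib

/-- Telescoping term for the Ginibre binomial identity. -/
def ginibreT (l k : ℕ) : ℚ :=
  ((2 * l + k) * (l + k) : ℚ) / (6 * l) *
    (Nat.choose (3 * l) (2 * l + k)) * (Nat.choose (3 * l) (2 * l - k))

lemma ginibre_step (l k : ℕ) (hl : 0 < l) (hk : k ≤ l) :
    (k : ℚ) * (Nat.choose (3 * l) (2 * l + k)) * (Nat.choose (3 * l) (2 * l - k)) =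
      ginibreT l k - ginibreT l (k + 1) := by
  have hA : (Nat.choose (3 * l) (2 * l + k + 1)) * (2 * l + k + 1) =
      (Nat.choose (3 * l) (2 * l + k)) * (l - k) := by
    have h := Nat.choose_succ_right_eq (3 * l) (2 * l + k)
    rwa [show 3 * l - (2 * l + k) = l - k by omega] at h
  have hB : (Nat.choose (3 * l) (2 * l - k)) * (2 * l - k) =
      (Nat.choose (3 * l) (2 * l - k - 1)) * (l + k + 1) := by
    have h := Nat.choose_succ_right_eq (3 * l) (2 * l - k - 1)
    rwa [show 2 * l - k - 1 + 1 = 2 * l - k by omega,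
      show 3 * l - (2 * l - k - 1) = l + k + 1 by omega] at h
  have hAQ : ((Nat.choose (3 * l) (2 * l + k + 1)) : ℚ) * (2 * l + k + 1) =
      ((Nat.choose (3 * l) (2 * l + k)) : ℚ) * ((l : ℚ) - k) := by
    have := congrArg (fun n : ℕ => (n : ℚ)) hA
    push_cast [Nat.cast_sub hk] at this
    linarith [this]
  have hBQ : ((Nat.choose (3 * l) (2 * l - k)) : ℚ) * (2 * (l : ℚ) - k) =
      ((Nat.choose (3 * l) (2 * l - k - 1)) : ℚ) * ((l : ℚ) + k + 1) := by
    have := congrArg (fun n : ℕ => (n : ℚ)) hB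
    have hk2 : k ≤ 2 * l := by omega
    push_cast [Nat.cast_sub hk2] at this
    linarith [this]
  have h1 : (2 * (l : ℚ) + k + 1) ≠ 0 := by positivity
  have h2 : ((l : ℚ) + k + 1) ≠ 0 := by positivity
  have hlQ : (0 : ℚ) < l := by exact_mod_cast hl
  have h6 : (6 * (l : ℚ)) ≠ 0 := by positivity
  have hc : ((Nat.choose (3 * l) (2 * l + k + 1)) : ℚ) =
      ((Nat.choose (3 * l) (2 * l + k)) : ℚ) * ((l : ℚ) - k) / (2 * l + k + 1) := by
    field_simp
    linarith [hAQ]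
  have hd : ((Nat.choose (3 * l) (2 * l - k - 1)) : ℚ) =
      ((Nat.choose (3 * l) (2 * l - k)) : ℚ) * (2 * (l : ℚ) - k) / ((l : ℚ) + k + 1) := by
    field_simp
    linarith [hBQ]
  have e1 : 2 * l + (k + 1) = 2 * l + k + 1 := by omega
  have e2 : 2 * l - (k + 1) = 2 * l - k - 1 := by omega
  simp only [ginibreT, e1, e2, hc, hd]
  push_cast
  field_simp
  ring

lemma ginibre_T_one (l : ℕ) (hl : 0 < l) :
    ginibreT l 1 = (l : ℚ) / 3 * (Nat.choose (3 * l) l) ^ 2 := by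
  have hsum : (0 : ℚ) * (Nat.choose (3 * l) (2 * l + 0)) * (Nat.choose (3 * l) (2 * l - 0)) =
      ginibreT l 0 - ginibreT l (0 + 1) := ginibre_step l 0 hl (by omega)
  have hT0 : ginibreT l 0 = (l : ℚ) / 3 * (Nat.choose (3 * l) l) ^ 2 := by
    simp only [ginibreT, Nat.add_zero, Nat.sub_zero]
    rw [show Nat.choose (3 * l) (2 * l) = Nat.choose (3 * l) l by
      rw [show 2 * l = 3 * l - l by omega]; exact Nat.choose_symm (by omega)]
    have hlQ : (0 : ℚ) < l := by exact_mod_cast hl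
    field_simp
    ring
  have : ginibreT l (0 + 1) = ginibreT l 0 := by
    simp only [zero_mul, Nat.cast_zero] at hsum
    linarith [hsum]
  rw [show (1 : ℕ) = 0 + 1 from rfl, this, hT0]

lemma ginibre_T_top (l : ℕ) (hl : 0 < l) : ginibreT l (l + 1) = 0 := by
  simp only [ginibreT]
  rw [show 2 * l + (l + 1) = 3 * l + 1 by omega, Nat.choose_succ_self]
  simp

theorem ginibre_product_binomial_identity (l : ℕ) (hl : 0 < l) :
    ∑ k ∈ Finset.Icc 1 l,
        (k : ℚ) * (Nat.choose (3 * l) (2 * l + k)) * (Nat.choose (3 * l) (2 * l - k)) =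
      (l : ℚ) / 3 * (Nat.choose (3 * l) l) ^ 2 := by
  have hstep : ∑ k ∈ Finset.Icc 1 l,
      (k : ℚ) * (Nat.choose (3 * l) (2 * l + k)) * (Nat.choose (3 * l) (2 * l - k)) =
      ∑ i ∈ Finset.range l, (ginibreT l (i + 1) - ginibreT l (i + 1 + 1)) := by
    rw [show Finset.Icc 1 l = Finset.Ico 1 (l + 1) by rfl, Finset.sum_Ico_eq_sum_range]
    simp only [show l + 1 - 1 = l from rfl]
    refine Finset.sum_congr rfl fun i _ => ?_
    rw [show 1 + i = i + 1 by omega]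
    exact ginibre_step l (i + 1) hl (by
      have := Finset.mem_range.mp ‹i ∈ Finset.range l›
      omega)
  rw [hstep, Finset.sum_range_sub' (fun i => ginibreT l (i + 1)) l]
  simp only [ginibre_T_top l hl, ginibre_T_one l hl]
  ring
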